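/- arXiv:1506.03717 — 4 statements merged into one kernel-verified Lean document; each statement's English description precedes it below -/
import Mathlib

section
/- For every real x > 0 and every integer j ≥ -1, the modified Bessel functions of the first kind satisfy the Turán-type inequality I_j(x)^2 - I_{j+1}(x) · I_{j-1}(x) > 0. -/
open Real

/-- Modified Bessel function of the first kind of integer order. -/
noncomputable def besselI (m : ℤ) (x : ℝ) : ℝ :=
  (1 / Real.pi) * ∫ θ in (0:ℝ)..Real.pi, Real.exp (x * Real.cos θ) * Real.cos (m * θ)

open MeasureTheory Finset intervalIntegral

noncomputable def momC (n m : ℕ) : ℝ :=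
  if 2 ∣ (n + m) then ((n.choose ((n+m)/2)) : ℝ) / 2^n * Real.pi else 0

lemma integral_cos_nat (m : ℕ) : ∫ θ in (0:ℝ)..Real.pi, Real.cos (m*θ) = momC 0 m := by
  rcases Nat.eq_zero_or_pos m with h | h
  · subst h; simp [momC]
  · have hm : (m:ℝ) ≠ 0 := Nat.cast_ne_zero.mpr h.ne'
    have := intervalIntegral.integral_comp_mul_left (fun x => Real.cos x) hm (a := 0) (b := Real.pi)
    simp only [integral_cos] at this
    rw [this]
    have : Real.sin (m * Real.pi) = 0 := by
      simpa using Real.sin_int_mul_pi m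
    rw [mul_zero, this]
    simp only [Real.sin_zero, sub_zero, smul_eq_mul, mul_zero]
    unfold momC
    split
    · next hdvd =>
      have : 0 < (0+m)/2 := by omega
      rw [Nat.choose_eq_zero_of_lt (by omega)]
      simp
    · rfl

lemma choose_two_mul_self_eq (t : ℕ) (ht : 0 < t) :
    ((2*t).choose t) = 2 * (2*t-1).choose t := by
  obtain ⟨s, rfl⟩ : ∃ s, t = s + 1 := ⟨t-1, by omega⟩
  have h1 : 2*(s+1) = (2*s+1) + 1 := by ring
  rw [h1, Nat.choose_succ_succ]
  have h2 : (2*s+1) - (s+1) = s := by omega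
  have := Nat.choose_symm (n := 2*s+1) (k := s+1) (by omega)
  rw [h2] at this
  rw [this]
  rw [show 2*s+1+1-1 = 2*s+1 from rfl]
  simp only [Nat.succ_eq_add_one]
  exact (two_mul _).symm

lemma momC_succ_zero (n : ℕ) : momC (n+1) 0 = momC n 1 := by
  unfold momC
  by_cases h : 2 ∣ (n+1)
  · rw [if_pos (by omega), if_pos (by omega)]
    obtain ⟨t, ht⟩ := h
    have ht0 : 0 < t := by omega
    simp only [Nat.add_zero]
    rw [show (n+1)/2 = t from by omega, show n = 2*t-1 from by omega,
      show 2*t-1+1 = 2*t from by omega, choose_two_mul_self_eq t ht0,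
      show 2*t = 2*t-1+1 from by omega]
    push_cast
    have h2 : (2:ℝ)^(2*t-1+1) = 2 * 2^(2*t-1) := by rw [pow_succ]; ring
    rw [h2]
    ring
  · rw [if_neg (by omega), if_neg (by omega)]

lemma momC_succ_succ (n m : ℕ) :
    momC (n+1) (m+1) = (momC n (m+2) + momC n m) / 2 := by
  unfold momC
  by_cases h : 2 ∣ (n + m)
  · rw [if_pos (by omega), if_pos (by omega), if_pos (by omega)]
    obtain ⟨t, ht⟩ := h
    have e1 : (n+1+(m+1))/2 = t+1 := by omega
    have e2 : (n+(m+2))/2 = t+1 := by omega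
    have e3 : (n+m)/2 = t := by omega
    rw [e1, e2, e3, Nat.choose_succ_succ]
    push_cast
    have h2 : (2:ℝ)^(n+1) = 2 * 2^n := by rw [pow_succ]; ring
    rw [h2]
    field_simp
    ring
  · rw [if_neg (by omega), if_neg (by omega), if_neg (by omega)]
    norm_num

lemma mom_eq (n : ℕ) : ∀ m : ℕ,
    (∫ θ in (0:ℝ)..Real.pi, (Real.cos θ)^n * Real.cos (m*θ)) = momC n m := by
  induction n with
  | zero => intro m; simpa using integral_cos_nat m
  | succ n ih =>
    intro m
    have hicont : ∀ (k : ℕ) (c : ℝ), IntervalIntegrable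
        (fun θ => (Real.cos θ)^k * Real.cos (c*θ)) MeasureTheory.volume 0 Real.pi := by
      intro k c
      exact ((Real.continuous_cos.pow k).mul
        (Real.continuous_cos.comp (continuous_const.mul continuous_id))).intervalIntegrable _ _
    match m with
    | 0 =>
      have : (∫ θ in (0:ℝ)..Real.pi, (Real.cos θ)^(n+1) * Real.cos ((0:ℕ)*θ))
          = ∫ θ in (0:ℝ)..Real.pi, (Real.cos θ)^n * Real.cos ((1:ℕ)*θ) := by
        apply intervalIntegral.integral_congr
        intro θ _
        simp [pow_succ, mul_comm]
      rw [this, ih 1, momC_succ_zero]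
    | m+1 =>
      have key : ∀ θ : ℝ, (Real.cos θ)^(n+1) * Real.cos ((m+1:ℕ)*θ)
          = ((Real.cos θ)^n * Real.cos ((m+2:ℕ)*θ) + (Real.cos θ)^n * Real.cos ((m:ℕ)*θ)) / 2 := by
        intro θ
        have : Real.cos ((m+2:ℕ)*θ) + Real.cos ((m:ℕ)*θ)
            = 2 * Real.cos θ * Real.cos ((m+1:ℕ)*θ) := by
          have h1 : ((m+2:ℕ):ℝ)*θ = ((m+1:ℕ):ℝ)*θ + θ := by push_cast; ring
          have h2 : ((m:ℕ):ℝ)*θ = ((m+1:ℕ):ℝ)*θ - θ := by push_cast; ring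
          rw [h1, h2, Real.cos_add, Real.cos_sub]
          ring
        calc (Real.cos θ)^(n+1) * Real.cos ((m+1:ℕ)*θ)
            = (Real.cos θ)^n * (2 * Real.cos θ * Real.cos ((m+1:ℕ)*θ)) / 2 := by
              rw [pow_succ]; ring
          _ = (Real.cos θ)^n * (Real.cos ((m+2:ℕ)*θ) + Real.cos ((m:ℕ)*θ)) / 2 := by rw [← this]
          _ = ((Real.cos θ)^n * Real.cos ((m+2:ℕ)*θ) + (Real.cos θ)^n * Real.cos ((m:ℕ)*θ)) / 2 := by
              ring
      rw [intervalIntegral.integral_congr (fun θ _ => key θ)]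
      rw [intervalIntegral.integral_div, intervalIntegral.integral_add (hicont n _) (hicont n _)]
      rw [ih (m+2), ih m, momC_succ_succ]


lemma hasSum_exp_real (y : ℝ) : HasSum (fun n => y^n / n.factorial) (Real.exp y) := by
  rw [Real.exp_eq_exp_ℝ]
  exact NormedSpace.expSeries_div_hasSum_exp y

lemma hasSum_mom (m : ℕ) (x : ℝ) :
    HasSum (fun n => x^n / n.factorial * momC n m) (Real.pi * besselI m x) := by
  have hpi : (0:ℝ) ≤ Real.pi := Real.pi_pos.le
  set F : ℕ → ℝ → ℝ := fun n θ => x^n / n.factorial * ((Real.cos θ)^n * Real.cos (m*θ)) with hF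
  have hcont : ∀ n, Continuous (F n) := by
    intro n
    exact continuous_const.mul ((Real.continuous_cos.pow n).mul
      (Real.continuous_cos.comp (continuous_const.mul continuous_id)))
  have hint : ∀ n, Integrable (F n) (volume.restrict (Set.Ioc (0:ℝ) Real.pi)) :=
    fun n => (hcont n).integrableOn_Ioc
  have hbound : ∀ n, (∫ θ in Set.Ioc (0:ℝ) Real.pi, ‖F n θ‖) ≤ |x|^n / n.factorial * Real.pi := by
    intro n
    have h1 : ∀ θ ∈ Set.Ioc (0:ℝ) Real.pi, ‖F n θ‖ ≤ |x|^n / n.factorial := by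
      intro θ _
      have habs : ‖F n θ‖ = |x|^n / n.factorial * (|Real.cos θ|^n * |Real.cos (m*θ)|) := by
        simp only [hF, Real.norm_eq_abs, abs_mul, abs_div, abs_pow, Nat.abs_cast, mul_assoc]
      rw [habs]
      have hc1 : |Real.cos θ|^n ≤ 1 := pow_le_one₀ (abs_nonneg _) (Real.abs_cos_le_one θ)
      have hc2 : |Real.cos (m*θ)| ≤ 1 := Real.abs_cos_le_one _
      have : |Real.cos θ|^n * |Real.cos (m*θ)| ≤ 1 := by
        calc |Real.cos θ|^n * |Real.cos (m*θ)| ≤ 1 * 1 := by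
              apply mul_le_mul hc1 hc2 (abs_nonneg _) zero_le_one
          _ = 1 := by ring
      calc |x|^n / n.factorial * (|Real.cos θ|^n * |Real.cos (m*θ)|)
          ≤ |x|^n / n.factorial * 1 := by
            apply mul_le_mul_of_nonneg_left this (by positivity)
        _ = |x|^n / n.factorial := by ring
    calc (∫ θ in Set.Ioc (0:ℝ) Real.pi, ‖F n θ‖)
        ≤ ∫ _ in Set.Ioc (0:ℝ) Real.pi, (|x|^n / n.factorial : ℝ) := by
          apply setIntegral_mono_on (hint n).norm (integrableOn_const (by
            rw [Real.volume_Ioc]; exact ENNReal.ofReal_ne_top)) measurableSet_Ioc h1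
      _ = |x|^n / n.factorial * Real.pi := by
          rw [setIntegral_const, Real.volume_real_Ioc, sub_zero, max_eq_left hpi,
            smul_eq_mul, mul_comm]
  have hsum : Summable fun n => ∫ θ in Set.Ioc (0:ℝ) Real.pi, ‖F n θ‖ := by
    apply Summable.of_nonneg_of_le (fun n => integral_nonneg (fun θ => norm_nonneg _)) hbound
    exact (Real.summable_pow_div_factorial |x|).mul_right _
  have key := MeasureTheory.hasSum_integral_of_summable_integral_norm hint hsum
  have hptw : ∀ θ : ℝ, (∑' n, F n θ) = Real.exp (x * Real.cos θ) * Real.cos (m*θ) := by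
    intro θ
    have h1 : HasSum (fun n => (x * Real.cos θ)^n / n.factorial * Real.cos (m*θ))
        (Real.exp (x * Real.cos θ) * Real.cos (m*θ)) :=
      (hasSum_exp_real (x * Real.cos θ)).mul_right _
    have h2 : ∀ n, (x * Real.cos θ)^n / n.factorial * Real.cos (m*θ) = F n θ := by
      intro n; simp only [hF, mul_pow]; ring
    exact (h1.congr_fun (fun n => (h2 n).symm)).tsum_eq
  have hIeq : (∫ θ in Set.Ioc (0:ℝ) Real.pi, (∑' n, F n θ))
      = Real.pi * besselI m x := by
    rw [MeasureTheory.setIntegral_congr_fun measurableSet_Ioc (fun θ _ => hptw θ)]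
    rw [besselI]
    rw [← intervalIntegral.integral_of_le hpi]
    push_cast
    field_simp
  have hterm : ∀ n, (∫ θ in Set.Ioc (0:ℝ) Real.pi, F n θ) = x^n / n.factorial * momC n m := by
    intro n
    rw [MeasureTheory.integral_const_mul, ← intervalIntegral.integral_of_le hpi, mom_eq n m]
  rw [hIeq] at key
  exact key.congr_fun (fun n => (hterm n).symm)


lemma hasSum_besselI (m : ℕ) (x : ℝ) :
    HasSum (fun k => (x/2)^(m+2*k) / (k.factorial * (k+m).factorial)) (besselI m x) := by
  have hpi : (Real.pi : ℝ) ≠ 0 := Real.pi_ne_zero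
  set g : ℕ → ℝ := fun n => x^n / n.factorial * momC n m with hg
  have hι : Function.Injective (fun k : ℕ => m + 2*k) := by
    intro a b h; dsimp at h; omega
  have hzero : ∀ n, n ∉ Set.range (fun k : ℕ => m + 2*k) → g n = 0 := by
    intro n hn
    have : ¬ (2 ∣ (n+m)) ∨ n < m := by
      by_contra hcon
      push_neg at hcon
      obtain ⟨⟨t, ht⟩, h2⟩ := hcon
      exact hn ⟨(n - m)/2, show m + 2*((n-m)/2) = n by omega⟩
    rcases this with h | h
    · simp [hg, momC, if_neg h]
    · rcases em (2 ∣ (n+m)) with h2 | h2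
      · have : n < (n+m)/2 := by omega
        simp [hg, momC, if_pos h2, Nat.choose_eq_zero_of_lt this]
      · simp [hg, momC, if_neg h2]
  have hmain : HasSum (g ∘ (fun k : ℕ => m + 2*k)) (Real.pi * besselI m x) :=
    (Function.Injective.hasSum_iff hι (by simpa using hzero)).2 (hasSum_mom m x)
  have hterm : ∀ k, (g ∘ (fun k : ℕ => m + 2*k)) k / Real.pi
      = (x/2)^(m+2*k) / (k.factorial * (k+m).factorial) := by
    intro k
    have hdvd : 2 ∣ (m + 2*k + m) := ⟨m + k, by ring⟩
    have hhalf : (m + 2*k + m)/2 = m + k := by omega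
    have hchoose : ((m+2*k).choose (m+k)) * (m+k).factorial * k.factorial
        = (m+2*k).factorial := by
      have := Nat.choose_mul_factorial_mul_factorial (n := m+2*k) (k := m+k) (by omega)
      rw [show m+2*k - (m+k) = k from by omega] at this
      exact this
    simp only [Function.comp, hg, momC, if_pos hdvd, hhalf]
    have hfac : ((m+2*k).factorial : ℝ) ≠ 0 := Nat.cast_ne_zero.2 (Nat.factorial_ne_zero _)
    have hfk : (k.factorial : ℝ) ≠ 0 := Nat.cast_ne_zero.2 (Nat.factorial_ne_zero _)
    have hfmk : ((m+k).factorial : ℝ) ≠ 0 := Nat.cast_ne_zero.2 (Nat.factorial_ne_zero _)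
    have hch : ((m+2*k).choose (m+k) : ℝ) * (m+k).factorial * k.factorial
        = (m+2*k).factorial := by exact_mod_cast congrArg (Nat.cast (R := ℝ)) hchoose
    have hch' : (((m+2*k).choose (m+k)) : ℝ)
        = ((m+2*k).factorial : ℝ) / ((m+k).factorial * k.factorial) := by
      field_simp
      linear_combination hch
    rw [show (k+m).factorial = (m+k).factorial from by rw [Nat.add_comm], hch', div_pow]
    field_simp
  have := hmain.div_const Real.pi
  rw [mul_comm, mul_div_assoc, div_self hpi, mul_one] at this
  exact this.congr_fun (fun k => (hterm k).symm)


lemma vand (n M d : ℕ) (h : n ≤ d) :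
    ∑ k ∈ range (n+1), n.choose k * M.choose (d - k) = (n + M).choose d := by
  rw [Nat.add_choose_eq, Finset.Nat.sum_antidiagonal_eq_sum_range_succ_mk]
  apply Finset.sum_subset
  · intro k hk
    simp only [mem_range] at *
    omega
  · intro k _ hk
    simp only [mem_range, not_lt] at hk
    rw [Nat.choose_eq_zero_of_lt (by omega), zero_mul]

lemma sum_recip (μ ν n : ℕ) :
    ∑ kl ∈ Finset.HasAntidiagonal.antidiagonal n,
      (1:ℝ) / (kl.1.factorial * (kl.1+μ).factorial * kl.2.factorial * (kl.2+ν).factorial)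
    = ((2*n+μ+ν).choose (n+ν) : ℝ) / (n.factorial * (n+μ+ν).factorial) := by
  have key : ∀ k ∈ range (n+1),
      (1:ℝ) / (k.factorial * (k+μ).factorial * (n-k).factorial * ((n-k)+ν).factorial)
      = (n.choose k * (μ+ν+n).choose ((n+ν) - k) : ℕ) / (n.factorial * (n+μ+ν).factorial) := by
    intro k hk
    simp only [mem_range] at hk
    have hkn : k ≤ n := by omega
    have h1 : n.choose k * k.factorial * (n-k).factorial = n.factorial :=
      Nat.choose_mul_factorial_mul_factorial hkn
    have h2 : (μ+ν+n).choose (n+ν-k) * (n+ν-k).factorial * ((μ+ν+n) - (n+ν-k)).factorial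
        = (μ+ν+n).factorial := Nat.choose_mul_factorial_mul_factorial (by omega)
    rw [show (μ+ν+n) - (n+ν-k) = k + μ from by omega,
        show n+ν-k = (n-k) + ν from by omega] at h2
    have h1' : (n.choose k : ℝ) * k.factorial * (n-k).factorial = n.factorial := by
      exact_mod_cast congrArg (Nat.cast (R := ℝ)) h1
    have h2' : ((μ+ν+n).choose (n+ν-k) : ℝ) * ((n-k)+ν).factorial * (k+μ).factorial
        = (μ+ν+n).factorial := by
      rw [show n+ν-k = (n-k)+ν from by omega]
      exact_mod_cast congrArg (Nat.cast (R := ℝ)) h2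
    have e : (n+μ+ν) = (μ+ν+n) := by omega
    rw [e]
    push_cast
    rw [div_eq_div_iff (by positivity) (by positivity)]
    nlinarith [h1', h2', Nat.factorial_pos k]
  rw [Finset.Nat.sum_antidiagonal_eq_sum_range_succ_mk, Finset.sum_congr rfl key]
  rw [← Finset.sum_div]
  congr 1
  have := vand n (μ+ν+n) (n+ν) (by omega)
  rw [show n + (μ+ν+n) = 2*n+μ+ν from by omega] at this
  exact_mod_cast congrArg (Nat.cast (R := ℝ)) this


lemma besselI_neg (m : ℤ) (x : ℝ) : besselI (-m) x = besselI m x := by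
  unfold besselI
  congr 1
  apply intervalIntegral.integral_congr
  intro θ _
  show Real.exp (x * Real.cos θ) * Real.cos (((-m : ℤ) : ℝ) * θ) = _
  push_cast
  rw [neg_mul, Real.cos_neg]

section core
variable {x : ℝ} (hx : 0 < x)

lemma choose_mid_lt (p : ℕ) : (2*p+2).choose p < (2*p+2).choose (p+1) := by
  have h := Nat.choose_succ_right_eq (2*p+2) p
  have hpos : 0 < (2*p+2).choose (p+1) := Nat.choose_pos (by omega)
  have : (2*p+2).choose p * (2*p+2-p) = (2*p+2).choose (p+1) * (p+1) := h.symm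
  have h2 : 2*p+2-p = p+2 := by omega
  rw [h2] at this
  nlinarith

lemma turan_core (p : ℕ) (hx : 0 < x) :
    0 < besselI ((p+1 : ℕ) : ℤ) x ^ 2 - besselI ((p+2 : ℕ) : ℤ) x * besselI ((p : ℕ) : ℤ) x := by
  set a : ℕ → ℕ → ℝ := fun μ k => (x/2)^(μ+2*k) / (k.factorial * (k+μ).factorial) with ha
  have hA : ∀ μ : ℕ, HasSum (a μ) (besselI (μ:ℤ) x) := fun μ => hasSum_besselI μ x
  have hpos : ∀ μ k, 0 ≤ a μ k := by
    intro μ k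
    apply div_nonneg (by positivity) (by positivity)
  have hnorm : ∀ μ : ℕ, Summable (fun k => ‖a μ k‖) := by
    intro μ
    exact (hA μ).summable.congr (fun k => (Real.norm_of_nonneg (hpos μ k)).symm)
  set D : ℕ → ℝ := fun n => (x/2)^(2*p+2+2*n) / (n.factorial * (n+2*p+2).factorial) with hD
  have hDpos : ∀ n, 0 < D n := by
    intro n
    apply div_pos (by positivity) (by positivity)
  -- closed forms for the antidiagonal sums
  have key : ∀ (μ ν : ℕ), μ + ν = 2*p+2 →
      ∀ n, (∑ kl ∈ Finset.HasAntidiagonal.antidiagonal n, a μ kl.1 * a ν kl.2)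
        = D n * ((2*n+2*p+2).choose (n+ν) : ℝ) := by
    intro μ ν hμν n
    have step : ∀ kl ∈ Finset.HasAntidiagonal.antidiagonal n, a μ kl.1 * a ν kl.2
        = (x/2)^(2*p+2+2*n) *
          ((1:ℝ) / (kl.1.factorial * (kl.1+μ).factorial * kl.2.factorial * (kl.2+ν).factorial)) := by
      intro kl hkl
      have hn : kl.1 + kl.2 = n := Finset.HasAntidiagonal.mem_antidiagonal.1 hkl
      simp only [ha]
      rw [div_mul_div_comm, ← pow_add,
        show (μ+2*kl.1)+(ν+2*kl.2) = 2*p+2+2*n from by omega]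
      ring
    rw [Finset.sum_congr rfl step, ← Finset.mul_sum, sum_recip μ ν n,
      show 2*n+μ+ν = 2*n+2*p+2 from by omega, show n+μ+ν = n+2*p+2 from by omega, hD]
    ring
  have hm1 : (besselI ((p+1:ℕ):ℤ) x) * (besselI ((p+1:ℕ):ℤ) x)
      = ∑' n, (D n * ((2*n+2*p+2).choose (n+(p+1)) : ℝ)) := by
    rw [← (hA (p+1)).tsum_eq,
      tsum_mul_tsum_eq_tsum_sum_antidiagonal_of_summable_norm (hnorm (p+1)) (hnorm (p+1))]
    exact tsum_congr (key (p+1) (p+1) (by omega))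
  have hm2 : (besselI ((p+2:ℕ):ℤ) x) * (besselI ((p:ℕ):ℤ) x)
      = ∑' n, (D n * ((2*n+2*p+2).choose (n+p) : ℝ)) := by
    rw [← (hA (p+2)).tsum_eq, ← (hA p).tsum_eq,
      tsum_mul_tsum_eq_tsum_sum_antidiagonal_of_summable_norm (hnorm (p+2)) (hnorm p)]
    exact tsum_congr (key (p+2) p (by omega))
  have hS1 : Summable (fun n => D n * ((2*n+2*p+2).choose (n+(p+1)) : ℝ)) := by
    apply Summable.congr ((summable_norm_sum_mul_antidiagonal_of_summable_norm
       (f := a (p+1)) (g := a (p+1)) (hnorm (p+1)) (hnorm (p+1))).of_norm)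
    exact key (p+1) (p+1) (by omega)
  have hS2 : Summable (fun n => D n * ((2*n+2*p+2).choose (n+p) : ℝ)) := by
    apply Summable.congr ((summable_norm_sum_mul_antidiagonal_of_summable_norm
       (f := a (p+2)) (g := a p) (hnorm (p+2)) (hnorm p)).of_norm)
    exact key (p+2) p (by omega)
  have hH1 : HasSum (fun n => D n * ((2*n+2*p+2).choose (n+(p+1)) : ℝ))
      ((besselI ((p+1:ℕ):ℤ) x) * (besselI ((p+1:ℕ):ℤ) x)) := by
    rw [hm1]; exact hS1.hasSum
  have hH2 : HasSum (fun n => D n * ((2*n+2*p+2).choose (n+p) : ℝ))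
      ((besselI ((p+2:ℕ):ℤ) x) * (besselI ((p:ℕ):ℤ) x)) := by
    rw [hm2]; exact hS2.hasSum
  have hdiff := hH1.sub hH2
  have hlt : (0:ℝ) < (besselI ((p+1:ℕ):ℤ) x) * (besselI ((p+1:ℕ):ℤ) x)
      - (besselI ((p+2:ℕ):ℤ) x) * (besselI ((p:ℕ):ℤ) x) := by
    refine hasSum_lt (f := fun _ => (0:ℝ)) (i := 0) ?_ ?_ hasSum_zero hdiff
    · intro n
      have hle : ((2*n+2*p+2).choose (n+p) : ℝ) ≤ ((2*n+2*p+2).choose (n+(p+1)) : ℝ) := by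
        have := Nat.choose_le_succ_of_lt_half_left
          (r := n+p) (n := 2*n+2*p+2) (by omega)
        exact_mod_cast this
      have := mul_le_mul_of_nonneg_left hle (hDpos n).le
      simpa using by linarith
    · show (0:ℝ) < _
      have hc : ((2*0+2*p+2).choose (0+p) : ℝ) < ((2*0+2*p+2).choose (0+(p+1)) : ℝ) := by
        have := choose_mid_lt p
        simp only [Nat.zero_add]
        exact_mod_cast (by simpa using this)
      have := mul_lt_mul_of_pos_left hc (hDpos 0)
      norm_num at this ⊢
      linarith
  calc (0:ℝ) < _ := hlt
    _ = besselI ((p+1 : ℕ) : ℤ) x ^ 2 - besselI ((p+2 : ℕ) : ℤ) x * besselI ((p : ℕ) : ℤ) x := by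
      ring
end core


lemma besselI_zero_one {x : ℝ} (hx : 0 < x) (ε : ℝ) (hε : ε = 1 ∨ ε = -1) :
    0 < besselI 0 x + ε * besselI 1 x := by
  have hpi := Real.pi_pos
  have hcont : ∀ c : ℝ, IntervalIntegrable
      (fun θ => Real.exp (x * Real.cos θ) * Real.cos (c * θ)) volume 0 Real.pi := by
    intro c
    exact ((Real.continuous_exp.comp (continuous_const.mul Real.continuous_cos)).mul
      (Real.continuous_cos.comp (continuous_const.mul continuous_id))).intervalIntegrable _ _
  have h0 : besselI 0 x = (1/Real.pi) * ∫ θ in (0:ℝ)..Real.pi, Real.exp (x * Real.cos θ) := by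
    unfold besselI
    congr 1
    apply intervalIntegral.integral_congr
    intro θ _
    norm_num
  have h1 : besselI 1 x = (1/Real.pi) * ∫ θ in (0:ℝ)..Real.pi,
      Real.exp (x * Real.cos θ) * Real.cos θ := by
    unfold besselI
    congr 1
    apply intervalIntegral.integral_congr
    intro θ _
    norm_num
  have hint0 : IntervalIntegrable (fun θ => Real.exp (x * Real.cos θ)) volume 0 Real.pi :=
    (Real.continuous_exp.comp (continuous_const.mul Real.continuous_cos)).intervalIntegrable _ _
  have hint1 : IntervalIntegrable (fun θ => ε * (Real.exp (x * Real.cos θ) * Real.cos θ))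
      volume 0 Real.pi :=
    (continuous_const.mul ((Real.continuous_exp.comp
      (continuous_const.mul Real.continuous_cos)).mul Real.continuous_cos)).intervalIntegrable _ _
  have comb : besselI 0 x + ε * besselI 1 x
      = (1/Real.pi) * ∫ θ in (0:ℝ)..Real.pi,
          (Real.exp (x * Real.cos θ) + ε * (Real.exp (x * Real.cos θ) * Real.cos θ)) := by
    rw [h0, h1, intervalIntegral.integral_add hint0 hint1, intervalIntegral.integral_const_mul]
    ring
  rw [comb]
  apply mul_pos (by positivity)
  apply intervalIntegral.intervalIntegral_pos_of_pos_on (hint0.add hint1)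
  · intro θ hθ
    obtain ⟨hθ1, hθ2⟩ := hθ
    have hc1 : Real.cos θ < 1 := by
      have := Real.cos_lt_cos_of_nonneg_of_le_pi (le_refl 0) hθ2.le hθ1
      simpa using this
    have hc2 : -1 < Real.cos θ := by
      have := Real.cos_lt_cos_of_nonneg_of_le_pi hθ1.le (le_refl Real.pi) hθ2
      simpa using this
    have he : 0 < Real.exp (x * Real.cos θ) := Real.exp_pos _
    rcases hε with h | h <;> subst h <;> nlinarith
  · exact Real.pi_pos

theorem turan_besselI (x : ℝ) (hx : 0 < x) (j : ℤ) (hj : -1 ≤ j) :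
    0 < besselI j x ^ 2 - besselI (j + 1) x * besselI (j - 1) x := by
  rcases lt_trichotomy j 0 with h | h | h
  · -- j = -1
    have hj1 : j = -1 := by omega
    subst hj1
    rw [show ((-1:ℤ) + 1) = 0 from by ring, show ((-1:ℤ) - 1) = -2 from by ring]
    rw [show ((-1:ℤ)) = -(1:ℤ) from rfl, besselI_neg 1 x,
        show ((-2:ℤ)) = -(2:ℤ) from rfl, besselI_neg 2 x]
    have := turan_core 0 hx
    norm_num at this
    nlinarith [this]
  · -- j = 0
    subst h
    rw [show ((0:ℤ) - 1) = -1 from by ring, show ((-1:ℤ)) = -(1:ℤ) from rfl, besselI_neg 1 x,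
        show ((0:ℤ) + 1) = 1 from by ring]
    have hp := besselI_zero_one hx 1 (Or.inl rfl)
    have hm := besselI_zero_one hx (-1) (Or.inr rfl)
    nlinarith
  · -- j ≥ 1
    obtain ⟨p, hp⟩ : ∃ p : ℕ, j = ((p+1 : ℕ) : ℤ) := ⟨(j-1).toNat, by omega⟩
    subst hp
    have e2 : ((p+1 : ℕ) : ℤ) + 1 = ((p+2 : ℕ) : ℤ) := by push_cast; ring
    have e3 : ((p+1 : ℕ) : ℤ) - 1 = ((p : ℕ) : ℤ) := by push_cast; ring
    rw [e2, e3]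
    exact turan_core p hx
end

section
/- For every real x > 0 and every integer j ≥ 0, the modified Bessel functions of the second kind satisfy K_j(x)^2 < K_{j-1}(x) · K_{j+1}(x). -/
set_option maxHeartbeats 1000000

open Real MeasureTheory

/-- Modified Bessel function of the second kind of integer order. -/
noncomputable def besselK (m : ℤ) (x : ℝ) : ℝ :=
  ∫ t in Set.Ioi (0:ℝ), Real.exp (-x * Real.cosh t) * Real.cosh (m * t)

lemma integrableK (x : ℝ) (hx : 0 < x) (c : ℝ) :
    IntegrableOn (fun t => Real.exp (-x * Real.cosh t) * Real.cosh (c * t))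
      (Set.Ioi (0:ℝ)) := by
  have hcont : Continuous fun t => Real.exp (-x * Real.cosh t) * Real.cosh (c * t) := by
    fun_prop
  obtain ⟨T, hT1, hT2⟩ : ∃ T : ℝ, 1 ≤ T ∧ 4 * (|c| + 1) / x ≤ T :=
    ⟨max 1 (4 * (|c| + 1) / x), le_max_left _ _, le_max_right _ _⟩
  have hT0 : (0:ℝ) ≤ T := by linarith
  have hsplit : Set.Ioi (0:ℝ) = Set.Ioc 0 T ∪ Set.Ioi T := (Set.Ioc_union_Ioi_eq_Ioi hT0).symm
  rw [hsplit]
  refine IntegrableOn.union hcont.integrableOn_Ioc ?_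
  refine Integrable.mono' (exp_neg_integrableOn_Ioi T one_pos)
    hcont.aestronglyMeasurable.restrict ?_
  rw [ae_restrict_iff' measurableSet_Ioi]
  refine Filter.Eventually.of_forall fun t ht => ?_
  simp only [Set.mem_Ioi] at ht
  have htT : T ≤ t := ht.le
  have ht0 : (0:ℝ) < t := lt_of_lt_of_le (by linarith) htT
  have hc1 : Real.cosh (c * t) ≤ Real.exp (|c| * t) := by
    calc Real.cosh (c * t) ≤ Real.exp |c * t| := by
          rw [Real.cosh_eq]
          have h1 : Real.exp (c*t) ≤ Real.exp |c*t| := Real.exp_le_exp.2 (le_abs_self _)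
          have h2 : Real.exp (-(c*t)) ≤ Real.exp |c*t| := Real.exp_le_exp.2 (neg_le_abs _)
          linarith
    _ = Real.exp (|c| * t) := by rw [abs_mul, abs_of_pos ht0]
  have hcosh : (|c| + 1) * t ≤ x * Real.cosh t := by
    have h1 : t ^ 2 / 4 ≤ Real.cosh t := by
      have ha : 1 + t + t ^ 2 / 2 ≤ Real.exp t := Real.quadratic_le_exp_of_nonneg ht0.le
      have hb : Real.exp t / 2 ≤ Real.cosh t := by
        rw [Real.cosh_eq]; have := (Real.exp_pos (-t)).le; linarith
      linarith
    have h3 : 4 * (|c| + 1) ≤ x * t := by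
      have h2 := le_trans hT2 htT
      rw [div_le_iff₀ hx] at h2; linarith [mul_comm x t]
    nlinarith
  have hnn : 0 ≤ Real.exp (-x * Real.cosh t) * Real.cosh (c * t) :=
    mul_nonneg (Real.exp_pos _).le (Real.cosh_pos _).le
  rw [Real.norm_of_nonneg hnn]
  calc Real.exp (-x * Real.cosh t) * Real.cosh (c * t)
      ≤ Real.exp (-x * Real.cosh t) * Real.exp (|c| * t) :=
        mul_le_mul_of_nonneg_left hc1 (Real.exp_pos _).le
    _ = Real.exp (|c| * t - x * Real.cosh t) := by rw [← Real.exp_add]; ring_nf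
    _ ≤ Real.exp (-1 * t) := Real.exp_le_exp.2 (by nlinarith)

lemma besselK_pos (m : ℤ) (x : ℝ) (hx : 0 < x) : 0 < besselK m x := by
  rw [besselK]
  rw [setIntegral_pos_iff_support_of_nonneg_ae]
  · refine lt_of_lt_of_le ?_ (measure_mono (s := Set.Ioi (0:ℝ)) ?_)
    · simp [Real.volume_Ioi]
    · intro t ht
      exact ⟨ne_of_gt (mul_pos (Real.exp_pos _) (Real.cosh_pos _)), ht⟩
  · exact Filter.Eventually.of_forall fun t =>
      mul_nonneg (Real.exp_pos _).le (Real.cosh_pos _).le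
  · exact integrableK x hx m

theorem turan_besselK (x : ℝ) (hx : 0 < x) (j : ℤ) (hj : 0 ≤ j) :
    besselK j x ^ 2 < besselK (j - 1) x * besselK (j + 1) x := by
  set c : ℝ := (j : ℝ) with hc
  set f : ℝ → ℝ := fun t => Real.exp (-x * Real.cosh t / 2) * Real.sqrt (Real.cosh ((c - 1) * t))
    with hf
  set g : ℝ → ℝ := fun t => Real.exp (-x * Real.cosh t / 2) * Real.sqrt (Real.cosh ((c + 1) * t))
    with hg
  have hfsq : ∀ t, f t ^ 2 = Real.exp (-x * Real.cosh t) * Real.cosh ((c - 1) * t) := by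
    intro t
    rw [hf, mul_pow, Real.sq_sqrt (Real.cosh_pos _).le, pow_two, ← Real.exp_add]
    ring_nf
  have hgsq : ∀ t, g t ^ 2 = Real.exp (-x * Real.cosh t) * Real.cosh ((c + 1) * t) := by
    intro t
    rw [hg, mul_pow, Real.sq_sqrt (Real.cosh_pos _).le, pow_two, ← Real.exp_add]
    ring_nf
  have hif : IntegrableOn (fun t => f t ^ 2) (Set.Ioi (0:ℝ)) := by
    simp_rw [hfsq]; exact integrableK x hx (c - 1)
  have hig : IntegrableOn (fun t => g t ^ 2) (Set.Ioi (0:ℝ)) := by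
    simp_rw [hgsq]; exact integrableK x hx (c + 1)
  have hfc : Continuous f := by rw [hf]; fun_prop
  have hgc : Continuous g := by rw [hg]; fun_prop
  have hfm : MemLp f 2 (volume.restrict (Set.Ioi (0:ℝ))) :=
    (memLp_two_iff_integrable_sq hfc.aestronglyMeasurable.restrict).2 hif
  have hgm : MemLp g 2 (volume.restrict (Set.Ioi (0:ℝ))) :=
    (memLp_two_iff_integrable_sq hgc.aestronglyMeasurable.restrict).2 hig
  have hifg : IntegrableOn (fun t => f t * g t) (Set.Ioi (0:ℝ)) := by
    refine Integrable.mono' ((hif.add hig).div_const 2)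
      ((hfc.mul hgc).aestronglyMeasurable.restrict)
      (Filter.Eventually.of_forall fun t => ?_)
    have h1 : 0 ≤ f t := mul_nonneg (Real.exp_pos _).le (Real.sqrt_nonneg _)
    have h2 : 0 ≤ g t := mul_nonneg (Real.exp_pos _).le (Real.sqrt_nonneg _)
    rw [Real.norm_of_nonneg (mul_nonneg h1 h2)]
    simp only [Pi.add_apply]
    nlinarith [sq_nonneg (f t - g t)]
  have key : ∀ t : ℝ, Real.cosh ((c - 1) * t) * Real.cosh ((c + 1) * t)
      = Real.cosh (c * t) ^ 2 + Real.sinh t ^ 2 := by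
    intro t
    have h1 : (c - 1) * t = c * t - t := by ring
    have h2 : (c + 1) * t = c * t + t := by ring
    rw [h1, h2, Real.cosh_sub, Real.cosh_add]
    nlinarith [Real.cosh_sq (c * t), Real.cosh_sq t]
  have hfg_eq : ∀ t : ℝ, f t * g t = Real.exp (-x * Real.cosh t)
      * Real.sqrt (Real.cosh ((c - 1) * t) * Real.cosh ((c + 1) * t)) := by
    intro t
    rw [hf, hg, Real.sqrt_mul (Real.cosh_pos _).le]
    rw [show Real.exp (-x * Real.cosh t / 2) * Real.sqrt (Real.cosh ((c - 1) * t)) *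
        (Real.exp (-x * Real.cosh t / 2) * Real.sqrt (Real.cosh ((c + 1) * t)))
      = Real.exp (-x * Real.cosh t / 2) * Real.exp (-x * Real.cosh t / 2) *
        (Real.sqrt (Real.cosh ((c - 1) * t)) * Real.sqrt (Real.cosh ((c + 1) * t))) from by ring,
      ← Real.exp_add]
    ring_nf
  have hiF : IntegrableOn (fun t => Real.exp (-x * Real.cosh t) * Real.cosh (c * t))
      (Set.Ioi (0:ℝ)) := integrableK x hx c
  have hstrict : besselK j x < ∫ t in Set.Ioi (0:ℝ), f t * g t := by
    have hbj : besselK j x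
        = ∫ t in Set.Ioi (0:ℝ), Real.exp (-x * Real.cosh t) * Real.cosh (c * t) := rfl
    rw [hbj]
    have hptle : ∀ t : ℝ, 0 < t →
        Real.exp (-x * Real.cosh t) * Real.cosh (c * t) < f t * g t := by
      intro t ht
      rw [hfg_eq t, key]
      refine mul_lt_mul_of_pos_left ?_ (Real.exp_pos _)
      have hs : 0 < Real.sinh t := Real.sinh_pos_iff.2 ht
      calc Real.cosh (c * t) = Real.sqrt (Real.cosh (c * t) ^ 2) := by
            rw [Real.sqrt_sq (Real.cosh_pos _).le]
        _ < Real.sqrt (Real.cosh (c * t) ^ 2 + Real.sinh t ^ 2) :=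
            Real.sqrt_lt_sqrt (sq_nonneg _) (by nlinarith)
    have hpos : 0 < ∫ t in Set.Ioi (0:ℝ),
        (f t * g t - Real.exp (-x * Real.cosh t) * Real.cosh (c * t)) := by
      rw [setIntegral_pos_iff_support_of_nonneg_ae]
      · refine lt_of_lt_of_le ?_ (measure_mono (s := Set.Ioi (0:ℝ)) ?_)
        · simp [Real.volume_Ioi]
        · intro t ht
          have := hptle t ht
          exact ⟨ne_of_gt (sub_pos.2 this), ht⟩
      · refine Filter.Eventually.of_forall fun t => sub_nonneg.2 ?_
        rw [hfg_eq t, key]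
        have h0 : Real.cosh (c * t) ≤ Real.sqrt (Real.cosh (c * t) ^ 2 + Real.sinh t ^ 2) := by
          calc Real.cosh (c * t) = Real.sqrt (Real.cosh (c * t) ^ 2) := by
                rw [Real.sqrt_sq (Real.cosh_pos _).le]
            _ ≤ Real.sqrt (Real.cosh (c * t) ^ 2 + Real.sinh t ^ 2) :=
                Real.sqrt_le_sqrt (by nlinarith [sq_nonneg (Real.sinh t)])
        nlinarith [Real.exp_pos (-x * Real.cosh t), Real.cosh_pos (c * t)]
      · exact hifg.sub hiF
    rw [integral_sub hifg hiF] at hpos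
    linarith
  have hCS : ∫ t in Set.Ioi (0:ℝ), f t * g t
      ≤ Real.sqrt (besselK (j - 1) x) * Real.sqrt (besselK (j + 1) x) := by
    have hconj : Real.HolderConjugate 2 2 := Real.HolderConjugate.two_two
    have h2 : ENNReal.ofReal (2:ℝ) = 2 := by norm_num
    have hH := integral_mul_le_Lp_mul_Lq_of_nonneg hconj
      (Filter.Eventually.of_forall fun t =>
        mul_nonneg (Real.exp_pos _).le (Real.sqrt_nonneg _) :
          0 ≤ᵐ[volume.restrict (Set.Ioi (0:ℝ))] f)
      (Filter.Eventually.of_forall fun t =>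
        mul_nonneg (Real.exp_pos _).le (Real.sqrt_nonneg _) :
          0 ≤ᵐ[volume.restrict (Set.Ioi (0:ℝ))] g)
      (h2 ▸ hfm) (h2 ▸ hgm)
    have hbf : besselK (j - 1) x = ∫ t in Set.Ioi (0:ℝ), f t ^ 2 := by
      rw [besselK]
      refine setIntegral_congr_fun measurableSet_Ioi fun t _ => ?_
      rw [hfsq t]
      push_cast
      rw [hc]
    have hbg : besselK (j + 1) x = ∫ t in Set.Ioi (0:ℝ), g t ^ 2 := by
      rw [besselK]
      refine setIntegral_congr_fun measurableSet_Ioi fun t _ => ?_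
      rw [hgsq t]
      push_cast
      rw [hc]
    rw [hbf, hbg]
    calc ∫ t in Set.Ioi (0:ℝ), f t * g t
        ≤ (∫ t in Set.Ioi (0:ℝ), f t ^ (2:ℝ)) ^ ((1:ℝ)/2)
          * (∫ t in Set.Ioi (0:ℝ), g t ^ (2:ℝ)) ^ ((1:ℝ)/2) := hH
      _ = Real.sqrt (∫ t in Set.Ioi (0:ℝ), f t ^ 2)
          * Real.sqrt (∫ t in Set.Ioi (0:ℝ), g t ^ 2) := by
          rw [Real.sqrt_eq_rpow, Real.sqrt_eq_rpow]
          norm_num [Real.rpow_two]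
  have hj0 : 0 < besselK j x := besselK_pos j x hx
  have hlt : besselK j x < Real.sqrt (besselK (j - 1) x) * Real.sqrt (besselK (j + 1) x) :=
    lt_of_lt_of_le hstrict hCS
  calc besselK j x ^ 2
      < (Real.sqrt (besselK (j - 1) x) * Real.sqrt (besselK (j + 1) x)) ^ 2 :=
        pow_lt_pow_left₀ hlt hj0.le two_ne_zero
    _ = besselK (j - 1) x * besselK (j + 1) x := by
        rw [mul_pow, Real.sq_sqrt (besselK_pos _ x hx).le, Real.sq_sqrt (besselK_pos _ x hx).le]
end

section
/- Let H be a complex Hilbert space and let f : [0,1] → H be a differentiable curve satisfying f'(t) = S f(t) + A f(t), where S is a bounded symmetric operator and A is a bounded skew-symmetric operator on H, both independent of t. If the commutator [S,A] = SA − AS is a positive operator, then the function H(t) = ⟨f(t), f(t)⟩ is logarithmically convex on [0,1], i.e., H(t) ≤ H(0)^{1−t} H(1)^t for all t ∈ [0,1]. -/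
open Real Complex

theorem logConvexity_abstract
    {H : Type*} [NormedAddCommGroup H] [InnerProductSpace ℂ H] [CompleteSpace H]
    (S A : H →L[ℂ] H)
    (hS : ∀ x y : H, inner ℂ (S x) y = (inner ℂ x (S y) : ℂ))
    (hA : ∀ x y : H, inner ℂ (A x) y = (-(inner ℂ x (A y)) : ℂ))
    (hcomm : ∀ x : H, 0 ≤ (inner ℂ (S (A x) - A (S x)) x : ℂ).re)
    (f : ℝ → H)
    (hf : ∀ t ∈ Set.Icc (0:ℝ) 1, HasDerivAt f (S (f t) + A (f t)) t)
    (t : ℝ) (ht : t ∈ Set.Icc (0:ℝ) 1) :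
    ‖f t‖ ^ 2 ≤ (‖f 0‖ ^ 2) ^ (1 - t) * (‖f 1‖ ^ 2) ^ t := by
  letI : InnerProductSpace ℝ H := InnerProductSpace.complexToReal
  have hre : ∀ x y : H, (inner ℝ x y : ℝ) = (inner ℂ x y : ℂ).re := fun x y => rfl
  -- skew part has zero real inner with itself
  have hAx : ∀ x : H, (inner ℝ x (A x) : ℝ) = 0 := by
    intro x
    have h1 := congrArg Complex.re (hA x x)
    have h2 : ((inner ℂ (A x) x : ℂ)).re = ((inner ℂ x (A x) : ℂ)).re :=
      by simpa using inner_re_symm (𝕜 := ℂ) (A x) x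
    rw [hre]
    simp only [Complex.neg_re] at h1
    linarith [h1, h2]
  -- real symmetry of S
  have hSr : ∀ x y : H, (inner ℝ (S x) y : ℝ) = (inner ℝ x (S y) : ℝ) := by
    intro x y
    rw [hre, hre, hS x y]
  -- positivity of the commutator term
  have hSA : ∀ x : H, 0 ≤ (inner ℝ (S x) (A x) : ℝ) := by
    intro x
    have h1 := hcomm x
    have h2 : (inner ℂ (S (A x) - A (S x)) x : ℂ) =
        inner ℂ (A x) (S x) + inner ℂ (S x) (A x) := by
      rw [inner_sub_left, hS (A x) x, hA (S x) x]
      ring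
    rw [h2] at h1
    have h3 : ((inner ℂ (A x) (S x) : ℂ)).re = ((inner ℂ (S x) (A x) : ℂ)).re :=
      by simpa using inner_re_symm (𝕜 := ℂ) (A x) (S x)
    simp only [Complex.add_re] at h1
    rw [hre]
    linarith [h1, h3]
  -- the three scalar functions
  set p : ℝ → ℝ := fun s => (inner ℝ (f s) (f s) : ℝ) with hp_def
  set q : ℝ → ℝ := fun s => 2 * (inner ℝ (S (f s)) (f s) : ℝ) with hq_def
  set r : ℝ → ℝ := fun s =>
    4 * (inner ℝ (S (f s)) (S (f s)) : ℝ) + 4 * (inner ℝ (S (f s)) (A (f s)) : ℝ) with hr_def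
  have hp' : ∀ s ∈ Set.Icc (0:ℝ) 1, HasDerivAt p (q s) s := by
    intro s hs
    have h1 := (hf s hs).inner ℝ (hf s hs)
    refine h1.congr_deriv ?_
    simp only [hq_def]
    rw [inner_add_right, inner_add_left, hAx (f s),
      real_inner_comm (f s) (A (f s)), hAx (f s),
      real_inner_comm (S (f s)) (f s)]
    ring
  have hq' : ∀ s ∈ Set.Icc (0:ℝ) 1, HasDerivAt q (r s) s := by
    intro s hs
    have hfS : HasDerivAt (fun u => S (f u)) (S (S (f s) + A (f s))) s :=
      (S.restrictScalars ℝ).hasFDerivAt.comp_hasDerivAt s (hf s hs)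
    have h1 := (hfS.inner ℝ (hf s hs)).const_mul (2:ℝ)
    refine h1.congr_deriv ?_
    simp only [hr_def]
    rw [inner_add_right, hSr (S (f s) + A (f s)) (f s), inner_add_left,
      real_inner_comm (S (f s)) (A (f s))]
    ring
  have hp0 : ∀ s : ℝ, 0 ≤ p s := fun s => real_inner_self_nonneg
  have hr0 : ∀ s : ℝ, 0 ≤ r s := by
    intro s
    have := real_inner_self_nonneg (F := H) (x := S (f s))
    have := hSA (f s)
    simp only [hr_def]
    linarith
  have hkey : ∀ s : ℝ, q s ^ 2 ≤ p s * r s := by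
    intro s
    have hcs := real_inner_mul_inner_self_le (S (f s)) (f s)
    have h1 := hSA (f s)
    have h2 := hp0 s
    have h3 := real_inner_self_nonneg (F := H) (x := S (f s))
    simp only [hp_def, hq_def, hr_def]
    nlinarith [hcs, h1, h2, h3]
  -- the perturbed log-convexity
  have key : ∀ ε : ℝ, 0 < ε → p t + ε ≤ (p 0 + ε) ^ (1 - t) * (p 1 + ε) ^ t := by
    intro ε hε
    have hpos : ∀ s : ℝ, 0 < p s + ε := fun s => by linarith [hp0 s]
    have hL1 : ∀ s ∈ Set.Icc (0:ℝ) 1,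
        HasDerivAt (fun u => Real.log (p u + ε)) (q s / (p s + ε)) s := by
      intro s hs
      exact ((hp' s hs).add_const ε).log (hpos s).ne'
    have hL2 : ∀ s ∈ Set.Icc (0:ℝ) 1,
        HasDerivAt (fun u => q u / (p u + ε))
          ((r s * (p s + ε) - q s * q s) / (p s + ε) ^ 2) s := by
      intro s hs
      exact (hq' s hs).div ((hp' s hs).add_const ε) (hpos s).ne'
    have hconv : ConvexOn ℝ (Set.Icc (0:ℝ) 1) (fun u => Real.log (p u + ε)) := by
      apply convexOn_of_hasDerivWithinAt2_nonneg (f' := fun s => q s / (p s + ε))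
        (f'' := fun s => (r s * (p s + ε) - q s * q s) / (p s + ε) ^ 2)
        (convex_Icc 0 1)
      · intro s hs
        exact ((hL1 s hs).continuousAt).continuousWithinAt
      · intro s hs
        exact (hL1 s (interior_subset hs)).hasDerivWithinAt
      · intro s hs
        exact (hL2 s (interior_subset hs)).hasDerivWithinAt
      · intro s hs
        apply div_nonneg _ (sq_nonneg _)
        have h1 := hkey s
        have h2 := hr0 s
        nlinarith [hε]
    have h0m : (0:ℝ) ∈ Set.Icc (0:ℝ) 1 := by constructor <;> norm_num
    have h1m : (1:ℝ) ∈ Set.Icc (0:ℝ) 1 := by constructor <;> norm_num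
    have ht0 : 0 ≤ 1 - t := by linarith [ht.2]
    have hlog := hconv.2 h0m h1m ht0 ht.1 (by ring)
    simp only [smul_eq_mul, mul_zero, mul_one, zero_add] at hlog
    have hexp := Real.exp_le_exp.mpr hlog
    rw [Real.exp_log (hpos t), Real.exp_add] at hexp
    calc p t + ε ≤ Real.exp ((1 - t) * Real.log (p 0 + ε)) *
          Real.exp (t * Real.log (p 1 + ε)) := hexp
      _ = (p 0 + ε) ^ (1 - t) * (p 1 + ε) ^ t := by
          rw [Real.rpow_def_of_pos (hpos 0), Real.rpow_def_of_pos (hpos 1),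
            mul_comm (Real.log (p 0 + ε)), mul_comm (Real.log (p 1 + ε))]
  -- take the limit ε → 0⁺
  have htend : Filter.Tendsto (fun ε : ℝ => (p 0 + ε) ^ (1 - t) * (p 1 + ε) ^ t)
      (nhdsWithin 0 (Set.Ioi 0)) (nhds ((p 0) ^ (1 - t) * (p 1) ^ t)) := by
    have c1 : ContinuousAt (fun ε : ℝ => (p 0 + ε) ^ (1 - t)) 0 := by
      have hrc : ContinuousAt (fun x : ℝ => x ^ (1 - t)) (p 0 + 0) :=
        Real.continuousAt_rpow_const _ _ (Or.inr (by linarith [ht.2]))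
      exact hrc.comp ((continuous_const.add continuous_id).continuousAt)
    have c2 : ContinuousAt (fun ε : ℝ => (p 1 + ε) ^ t) 0 := by
      have hrc : ContinuousAt (fun x : ℝ => x ^ t) (p 1 + 0) :=
        Real.continuousAt_rpow_const _ _ (Or.inr ht.1)
      exact hrc.comp ((continuous_const.add continuous_id).continuousAt)
    have := (c1.mul c2).tendsto
    simp only [Pi.mul_apply, add_zero] at this
    exact this.mono_left nhdsWithin_le_nhds
  have hev : ∀ᶠ ε in nhdsWithin (0:ℝ) (Set.Ioi 0),
      p t ≤ (p 0 + ε) ^ (1 - t) * (p 1 + ε) ^ t := by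
    filter_upwards [self_mem_nhdsWithin] with ε hε
    have : (0:ℝ) < ε := hε
    linarith [key ε this]
  have final : p t ≤ (p 0) ^ (1 - t) * (p 1) ^ t := ge_of_tendsto htend hev
  have hps : ∀ s : ℝ, p s = ‖f s‖ ^ 2 := fun s => real_inner_self_eq_norm_sq (f s)
  rw [hps t, hps 0, hps 1] at final
  exact final
end

section
/- For every s > 0, π(I₀(s) − L₀(s)) = 2/s + R(s) where |R(s)| ≤ 16/s³; in particular, for s large enough, π(I₀(s) − L₀(s)) ≤ 3/s. -/
open Real intervalIntegral

lemma aux_sub_cube_le_sin {x : ℝ} (hx : 0 ≤ x) : x - x ^ 3 / 6 ≤ Real.sin x := by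
  have hd : ∀ t : ℝ, HasDerivAt (fun t => Real.sin t - t + t ^ 3 / 6)
      (Real.cos t - 1 + t ^ 2 / 2) t := by
    intro t
    have h1 := (Real.hasDerivAt_sin t).sub (hasDerivAt_id t)
    have h2 := (hasDerivAt_pow 3 t).div_const 6
    have := h1.add h2
    refine this.congr_deriv ?_
    ring
  have hmono : Monotone (fun t => Real.sin t - t + t ^ 3 / 6) := by
    apply monotone_of_deriv_nonneg
    · exact fun t => (hd t).differentiableAt
    · intro t
      rw [(hd t).deriv]
      nlinarith [Real.one_sub_sq_div_two_le_cos (x := t)]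
  have := hmono hx
  simp only [Real.sin_zero] at this
  nlinarith [this]

/-- Antiderivative bound: ∫₀^T x³ e^{-cx} ≤ 6/c⁴ for c > 0, T ≥ 0. -/
lemma aux_cube_exp_integral {c T : ℝ} (hc : 0 < c) (hT : 0 ≤ T) :
    ∫ x in (0:ℝ)..T, x ^ 3 * Real.exp (-c * x) ≤ 6 / c ^ 4 := by
  set F : ℝ → ℝ := fun x =>
    -Real.exp (-c * x) * (x ^ 3 / c + 3 * x ^ 2 / c ^ 2 + 6 * x / c ^ 3 + 6 / c ^ 4) with hF
  have hd : ∀ x : ℝ, HasDerivAt F (x ^ 3 * Real.exp (-c * x)) x := by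
    intro x
    have he : HasDerivAt (fun x : ℝ => Real.exp (-c * x)) (-c * Real.exp (-c * x)) x := by
      have := ((hasDerivAt_id x).const_mul (-c)).exp
      simpa [mul_comm] using this
    have hp : HasDerivAt (fun x : ℝ => x ^ 3 / c + 3 * x ^ 2 / c ^ 2 + 6 * x / c ^ 3 + 6 / c ^ 4)
        (3 * x ^ 2 / c + 6 * x / c ^ 2 + 6 / c ^ 3) x := by
      have h1 := (hasDerivAt_pow 3 x).div_const c
      have h2 := ((hasDerivAt_pow 2 x).const_mul 3).div_const (c ^ 2)
      have h3 := ((hasDerivAt_id x).const_mul 6).div_const (c ^ 3)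
      have := ((h1.add h2).add h3).add_const (6 / c ^ 4)
      refine this.congr_deriv ?_
      ring
    have := (he.neg.mul hp)
    refine this.congr_deriv ?_
    simp only [Pi.neg_apply]
    field_simp
    ring
  have hint : ∫ x in (0:ℝ)..T, x ^ 3 * Real.exp (-c * x) = F T - F 0 := by
    apply intervalIntegral.integral_eq_sub_of_hasDerivAt
    · intro x _; exact hd x
    · apply Continuous.intervalIntegrable; fun_prop
  rw [hint]
  have hF0 : F 0 = -(6 / c ^ 4) := by simp [hF]
  rw [hF0]
  have hexp : 0 < Real.exp (-c * T) := Real.exp_pos _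
  have hnn : 0 ≤ T ^ 3 / c + 3 * T ^ 2 / c ^ 2 + 6 * T / c ^ 3 + 6 / c ^ 4 := by positivity
  have : 0 ≤ Real.exp (-c * T) * (T ^ 3 / c + 3 * T ^ 2 / c ^ 2 + 6 * T / c ^ 3 + 6 / c ^ 4) :=
    mul_nonneg hexp.le hnn
  simp only [hF]
  nlinarith [this]

lemma aux_exp_integral {s T : ℝ} (hs : 0 < s) :
    ∫ x in (0:ℝ)..T, Real.exp (-s * x) = (1 - Real.exp (-s * T)) / s := by
  have hd : ∀ x : ℝ, HasDerivAt (fun x : ℝ => -Real.exp (-s * x) / s) (Real.exp (-s * x)) x := by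
    intro x
    have he : HasDerivAt (fun x : ℝ => Real.exp (-s * x)) (-s * Real.exp (-s * x)) x := by
      have := ((hasDerivAt_id x).const_mul (-s)).exp
      simpa [mul_comm] using this
    have := (he.neg).div_const s
    refine this.congr_deriv ?_
    field_simp
  have hint : IntervalIntegrable (fun x : ℝ => Real.exp (-s * x)) MeasureTheory.volume 0 T :=
    Continuous.intervalIntegrable (by fun_prop) _ _
  rw [intervalIntegral.integral_eq_sub_of_hasDerivAt (fun x _ => hd x) hint]
  simp
  ring

set_option maxHeartbeats 1000000 in
theorem struve_asymptotic :
    (∀ s : ℝ, 0 < s →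
      |(∫ x in (0:ℝ)..Real.pi, Real.exp (-s * Real.sin x)) - 2 / s| ≤ 16 / s ^ 3) ∧
    ∃ s₀ : ℝ, 0 < s₀ ∧ ∀ s : ℝ, s₀ ≤ s →
      (∫ x in (0:ℝ)..Real.pi, Real.exp (-s * Real.sin x)) ≤ 3 / s := by
  have hpi := Real.pi_pos
  have key : ∀ s : ℝ, 0 < s →
      |(∫ x in (0:ℝ)..Real.pi, Real.exp (-s * Real.sin x)) - 2 / s| ≤ 16 / s ^ 3 := by
    intro s hs
    -- symmetry: integral over [0,π] = 2 * integral over [0,π/2]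
    have hcont : Continuous fun x : ℝ => Real.exp (-s * Real.sin x) := by fun_prop
    have hsplit : (∫ x in (0:ℝ)..Real.pi, Real.exp (-s * Real.sin x)) =
        2 * ∫ x in (0:ℝ)..(Real.pi/2), Real.exp (-s * Real.sin x) := by
      have h1 : (∫ x in (0:ℝ)..(Real.pi/2), Real.exp (-s * Real.sin x)) +
          (∫ x in (Real.pi/2)..Real.pi, Real.exp (-s * Real.sin x)) =
          ∫ x in (0:ℝ)..Real.pi, Real.exp (-s * Real.sin x) :=
        intervalIntegral.integral_add_adjacent_intervals
          (hcont.intervalIntegrable _ _) (hcont.intervalIntegrable _ _)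
      have h2 : (∫ x in (Real.pi/2)..Real.pi, Real.exp (-s * Real.sin x)) =
          ∫ x in (0:ℝ)..(Real.pi/2), Real.exp (-s * Real.sin x) := by
        have := intervalIntegral.integral_comp_sub_left
          (a := (0:ℝ)) (b := Real.pi/2) (fun x => Real.exp (-s * Real.sin x)) Real.pi
        rw [show Real.pi - Real.pi/2 = Real.pi/2 by ring, sub_zero] at this
        rw [← this]
        congr 1
        ext x
        rw [Real.sin_pi_sub]
      linarith
    set J := ∫ x in (0:ℝ)..(Real.pi/2), Real.exp (-s * Real.sin x) with hJ
    -- lower bound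
    have hlow : (1 - Real.exp (-s * (Real.pi/2))) / s ≤ J := by
      rw [← aux_exp_integral hs]
      apply intervalIntegral.integral_mono_on (by linarith)
        (Continuous.intervalIntegrable (by fun_prop) _ _)
        (hcont.intervalIntegrable _ _)
      intro x hx
      apply Real.exp_le_exp.2
      have := Real.sin_le hx.1
      nlinarith
    -- upper bound
    have hupp : J ≤ (1 - Real.exp (-s * (Real.pi/2))) / s + Real.pi ^ 4 / (16 * s ^ 3) := by
      have hptw : ∀ x ∈ Set.Icc (0:ℝ) (Real.pi/2),
          Real.exp (-s * Real.sin x) ≤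
            Real.exp (-s * x) + (s / 6) * (x ^ 3 * Real.exp (-(2 * s / Real.pi) * x)) := by
        intro x hx
        obtain ⟨hx0, hx2⟩ := hx
        have hsin1 : x - x ^ 3 / 6 ≤ Real.sin x := aux_sub_cube_le_sin hx0
        have hsin2 : 2 / Real.pi * x ≤ Real.sin x := Real.mul_le_sin hx0 hx2
        have hsinle : Real.sin x ≤ x := Real.sin_le hx0
        -- e^{-s sin x} - e^{-s x} = e^{-s sin x}(1 - e^{-s(x - sin x)}) ≤ e^{-s sin x} s (x - sin x)
        have ht : 0 ≤ s * (x - Real.sin x) := by nlinarith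
        have h1me : 1 - Real.exp (-(s * (x - Real.sin x))) ≤ s * (x - Real.sin x) := by
          have := Real.add_one_le_exp (-(s * (x - Real.sin x)))
          linarith
        have heq : Real.exp (-s * x) =
            Real.exp (-s * Real.sin x) * Real.exp (-(s * (x - Real.sin x))) := by
          rw [← Real.exp_add]; ring_nf
        have hEpos : 0 < Real.exp (-s * Real.sin x) := Real.exp_pos _
        have hdiff : Real.exp (-s * Real.sin x) - Real.exp (-s * x) ≤
            Real.exp (-s * Real.sin x) * (s * (x - Real.sin x)) := by
          rw [heq]
          nlinarith [h1me, hEpos]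
        have hEle : Real.exp (-s * Real.sin x) ≤ Real.exp (-(2 * s / Real.pi) * x) := by
          apply Real.exp_le_exp.2
          have : 2 / Real.pi * x ≤ Real.sin x := hsin2
          have hh : 2 * s / Real.pi * x ≤ s * Real.sin x := by
            rw [div_mul_eq_mul_div, div_le_iff₀ hpi] at *
            nlinarith
          linarith
        have hx3 : x - Real.sin x ≤ x ^ 3 / 6 := by linarith
        have hEpos2 : 0 < Real.exp (-(2 * s / Real.pi) * x) := Real.exp_pos _
        calc Real.exp (-s * Real.sin x)
            ≤ Real.exp (-s * x) + Real.exp (-s * Real.sin x) * (s * (x - Real.sin x)) := by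
              linarith
          _ ≤ Real.exp (-s * x) + (s / 6) * (x ^ 3 * Real.exp (-(2 * s / Real.pi) * x)) := by
              have h1 : Real.exp (-s * Real.sin x) * (s * (x - Real.sin x)) ≤
                  Real.exp (-(2 * s / Real.pi) * x) * (s * (x ^ 3 / 6)) := by
                apply mul_le_mul hEle _ (by nlinarith) hEpos2.le
                nlinarith
              nlinarith
      have hmono : J ≤ ∫ x in (0:ℝ)..(Real.pi/2),
          (Real.exp (-s * x) + (s / 6) * (x ^ 3 * Real.exp (-(2 * s / Real.pi) * x))) := by
        apply intervalIntegral.integral_mono_on (by linarith)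
          (hcont.intervalIntegrable _ _)
          (Continuous.intervalIntegrable (by fun_prop) _ _) hptw
      have hsum : (∫ x in (0:ℝ)..(Real.pi/2),
          (Real.exp (-s * x) + (s / 6) * (x ^ 3 * Real.exp (-(2 * s / Real.pi) * x)))) =
          (∫ x in (0:ℝ)..(Real.pi/2), Real.exp (-s * x)) +
          (s / 6) * ∫ x in (0:ℝ)..(Real.pi/2), x ^ 3 * Real.exp (-(2 * s / Real.pi) * x) := by
        rw [intervalIntegral.integral_add (Continuous.intervalIntegrable (by fun_prop) _ _)
          (Continuous.intervalIntegrable (by fun_prop) _ _),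
          intervalIntegral.integral_const_mul]
      have hc : (0:ℝ) < 2 * s / Real.pi := by positivity
      have hcube : (∫ x in (0:ℝ)..(Real.pi/2), x ^ 3 * Real.exp (-(2 * s / Real.pi) * x))
          ≤ 6 / (2 * s / Real.pi) ^ 4 := aux_cube_exp_integral hc (by linarith)
      have hval : 6 / (2 * s / Real.pi) ^ 4 = 6 * Real.pi ^ 4 / (16 * s ^ 4) := by
        field_simp
        ring
      rw [hsum, aux_exp_integral hs] at hmono
      have : (s / 6) * (∫ x in (0:ℝ)..(Real.pi/2), x ^ 3 * Real.exp (-(2 * s / Real.pi) * x))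
          ≤ (s / 6) * (6 * Real.pi ^ 4 / (16 * s ^ 4)) := by
        apply mul_le_mul_of_nonneg_left _ (by positivity)
        rw [← hval]; exact hcube
      have heq2 : (s / 6) * (6 * Real.pi ^ 4 / (16 * s ^ 4)) = Real.pi ^ 4 / (16 * s ^ 3) := by
        field_simp
      linarith [heq2 ▸ this]
    -- numeric combination
    have hexpb : s ^ 2 * Real.exp (-s * (Real.pi/2)) ≤ 8 := by
      have h1 : Real.exp (s * Real.pi / 4) ≥ s * Real.pi / 4 := by
        linarith [Real.add_one_le_exp (s * Real.pi / 4)]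
      have h2 : Real.exp (s * (Real.pi/2)) = Real.exp (s * Real.pi / 4) ^ 2 := by
        rw [← Real.exp_nat_mul]; norm_num; ring_nf
      have h3 : Real.exp (s * (Real.pi/2)) ≥ (s * Real.pi / 4) ^ 2 := by
        rw [h2]
        have : 0 ≤ s * Real.pi / 4 := by positivity
        nlinarith
      have h4 : Real.exp (-s * (Real.pi/2)) = 1 / Real.exp (s * (Real.pi/2)) := by
        rw [eq_div_iff (Real.exp_ne_zero _), ← Real.exp_add]; norm_num
      have h5 : (s * Real.pi / 4) ^ 2 > 0 := by positivity
      have hpi3 : Real.pi > 3 := Real.pi_gt_three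
      rw [h4]
      rw [div_le_iff₀ (by positivity), ge_iff_le, ← sub_nonneg] at *
      have h6 : 1 / Real.exp (s * (Real.pi/2)) ≤ 1 / (s * Real.pi / 4) ^ 2 := by
        apply one_div_le_one_div_of_le h5
        linarith
      have h7 : s ^ 2 * (1 / (s * Real.pi / 4) ^ 2) = 16 / Real.pi ^ 2 := by
        field_simp
        ring
      have h8 : s ^ 2 * (1 / Real.exp (s * (Real.pi/2))) ≤ 16 / Real.pi ^ 2 := by
        calc s ^ 2 * (1 / Real.exp (s * (Real.pi/2))) ≤ s ^ 2 * (1 / (s * Real.pi / 4) ^ 2) :=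
          mul_le_mul_of_nonneg_left h6 (by positivity)
        _ = 16 / Real.pi ^ 2 := h7
      have : 16 / Real.pi ^ 2 ≤ 8 := by
        rw [div_le_iff₀ (by positivity)]
        nlinarith
      linarith
    have hpib : Real.pi ^ 4 ≤ 100 := by
      have h := Real.pi_lt_d2
      have h0 := Real.pi_pos
      have hsq : Real.pi ^ 2 ≤ 3.15 ^ 2 := by nlinarith
      nlinarith [sq_nonneg (Real.pi ^ 2)]
    have hE : 0 < Real.exp (-s * (Real.pi/2)) := Real.exp_pos _
    rw [hsplit]
    rw [abs_le]
    constructor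
    · -- lower: 2J - 2/s ≥ -16/s³
      have h1 : 2 * J ≥ 2 * ((1 - Real.exp (-s * (Real.pi/2))) / s) := by linarith
      have h2 : 2 * ((1 - Real.exp (-s * (Real.pi/2))) / s) = 2 / s -
          2 * Real.exp (-s * (Real.pi/2)) / s := by ring
      have h3 : 2 * Real.exp (-s * (Real.pi/2)) / s ≤ 16 / s ^ 3 := by
        rw [div_le_div_iff₀ hs (by positivity)]
        nlinarith
      linarith
    · -- upper: 2J - 2/s ≤ 16/s³
      have h1 : 2 * J ≤ 2 / s - 2 * Real.exp (-s * (Real.pi/2)) / s +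
          2 * (Real.pi ^ 4 / (16 * s ^ 3)) := by
        have : 2 * ((1 - Real.exp (-s * (Real.pi/2))) / s) = 2 / s -
            2 * Real.exp (-s * (Real.pi/2)) / s := by ring
        linarith
      have h2 : 2 * (Real.pi ^ 4 / (16 * s ^ 3)) ≤ 16 / s ^ 3 := by
        have heq : 2 * (Real.pi ^ 4 / (16 * s ^ 3)) = Real.pi ^ 4 / 8 / s ^ 3 := by ring
        rw [heq, div_le_div_iff₀ (by positivity) (by positivity)]
        nlinarith [pow_pos hs 3]
      have h3 : 0 ≤ 2 * Real.exp (-s * (Real.pi/2)) / s := by positivity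
      linarith
  refine ⟨key, 4, by norm_num, fun s hs => ?_⟩
  have hs0 : (0:ℝ) < s := by linarith
  have := key s hs0
  rw [abs_le] at this
  have h1 : 16 / s ^ 3 ≤ 1 / s := by
    rw [div_le_div_iff₀ (by positivity) hs0]
    nlinarith [mul_nonneg (mul_nonneg hs0.le (by linarith : (0:ℝ) ≤ s - 4)) (by linarith : (0:ℝ) ≤ s + 4)]
  have h2 : 2 / s + 1 / s = 3 / s := by ring
  linarith [this.2]
end
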